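/- Let α = (α₁, …, αₙ) be an n-dimensional finite signed vector measure on (S, F) and let |α| := Σᵢ |αᵢ| be its total variation with respect to the 1-norm. Then the Radon–Nikodym derivative dα/d|α| : S → ℝⁿ satisfies ‖(dα/d|α|)(s)‖₁ = 1 for |α|-almost every s ∈ S. -/

import Mathlib

open MeasureTheory

instance totalVariation_isFiniteMeasure {S : Type*} [MeasurableSpace S]
    (t : SignedMeasure S) : IsFiniteMeasure t.totalVariation := by
  unfold SignedMeasure.totalVariation; infer_instance

private lemma rnDeriv_finset_sum {S : Type*} [MeasurableSpace S] {ι : Type*}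
    (s : Finset ι) (ν : ι → Measure S) [∀ i, IsFiniteMeasure (ν i)]
    (μ : Measure S) [SigmaFinite μ] :
    (∑ i ∈ s, ν i).rnDeriv μ =ᵐ[μ] fun x => ∑ i ∈ s, (ν i).rnDeriv μ x := by
  classical
  induction s using Finset.induction with
  | empty => exact Measure.rnDeriv_zero μ
  | @insert a s ha ih =>
    rw [Finset.sum_insert ha]
    filter_upwards [Measure.rnDeriv_add' (ν a) (∑ i ∈ s, ν i) μ, ih] with x h1 h2
    simp only [Pi.add_apply, h1, h2, Finset.sum_insert ha]

theorem rnDeriv_totalVariation_norm_one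
    {n : ℕ} {S : Type*} [MeasurableSpace S]
    (α : Fin n → SignedMeasure S) :
    ∀ᵐ s ∂(∑ i, (α i).totalVariation),
      ∑ i, |(α i).rnDeriv (∑ j, (α j).totalVariation) s| = 1 := by
  set μ := ∑ j, (α j).totalVariation with hμ
  set p := fun i => (α i).toJordanDecomposition.posPart with hp
  set q := fun i => (α i).toJordanDecomposition.negPart with hq
  -- absolute continuity
  have htv : ∀ i, (α i).totalVariation ≪ μ := by
    intro i s hs
    rw [hμ] at hs
    rw [Measure.coe_finset_sum, Finset.sum_apply] at hs
    exact (Finset.sum_eq_zero_iff.1 hs) i (Finset.mem_univ i)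
  have hpac : ∀ i, p i ≪ μ := fun i =>
    ((Measure.le_add_right le_rfl : p i ≤ p i + q i).absolutelyContinuous).trans (htv i)
  have hqac : ∀ i, q i ≪ μ := fun i =>
    ((Measure.le_add_left le_rfl : q i ≤ p i + q i).absolutelyContinuous).trans (htv i)
  -- mutual singularity: for each i, min of rnDerivs is 0 a.e.
  have hsing : ∀ i, ∀ᵐ x ∂μ, (p i).rnDeriv μ x = 0 ∨ (q i).rnDeriv μ x = 0 := by
    intro i
    obtain ⟨A, hA, hpA, hqA⟩ := (α i).toJordanDecomposition.mutuallySingular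
    have hp0 : (p i).rnDeriv μ =ᵐ[μ.restrict A] 0 := by
      rw [← lintegral_eq_zero_iff (Measure.measurable_rnDeriv _ _),
        Measure.setLIntegral_rnDeriv' (hpac i) hA]
      exact hpA
    have hq0 : (q i).rnDeriv μ =ᵐ[μ.restrict Aᶜ] 0 := by
      rw [← lintegral_eq_zero_iff (Measure.measurable_rnDeriv _ _),
        Measure.setLIntegral_rnDeriv' (hqac i) hA.compl]
      exact hqA
    rw [Filter.EventuallyEq, ae_restrict_iff' hA] at hp0
    rw [Filter.EventuallyEq, ae_restrict_iff' hA.compl] at hq0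
    filter_upwards [hp0, hq0] with x h1 h2
    by_cases hx : x ∈ A
    · exact Or.inl (h1 hx)
    · exact Or.inr (h2 hx)
  have hfin : ∀ i, ∀ᵐ x ∂μ, (p i).rnDeriv μ x < ⊤ ∧ (q i).rnDeriv μ x < ⊤ := fun i =>
    (Measure.rnDeriv_lt_top _ _).and (Measure.rnDeriv_lt_top _ _)
  have hself : μ.rnDeriv μ =ᵐ[μ] fun _ => 1 := Measure.rnDeriv_self μ
  have hsum : μ.rnDeriv μ =ᵐ[μ] fun x => ∑ i, ((p i).rnDeriv μ x + (q i).rnDeriv μ x) := by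
    have h1 : μ.rnDeriv μ =ᵐ[μ] fun x => ∑ i, ((α i).totalVariation).rnDeriv μ x := by
      rw [hμ]; exact rnDeriv_finset_sum Finset.univ _ μ
    have h2 : ∀ i : Fin n, ((α i).totalVariation).rnDeriv μ
        =ᵐ[μ] fun x => (p i).rnDeriv μ x + (q i).rnDeriv μ x := fun i =>
      Measure.rnDeriv_add' (p i) (q i) μ
    filter_upwards [h1, ae_all_iff.2 h2] with x hx1 hx2
    rw [hx1]
    exact Finset.sum_congr rfl fun i _ => hx2 i
  filter_upwards [hself, hsum, ae_all_iff.2 hsing, ae_all_iff.2 hfin] with x h1 h2 h3 h4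
  have key : ∀ i : Fin n, |(α i).rnDeriv μ x|
      = ((p i).rnDeriv μ x).toReal + ((q i).rnDeriv μ x).toReal := by
    intro i
    rw [SignedMeasure.rnDeriv]
    rcases h3 i with h | h <;> rw [h] <;> simp [abs_of_nonneg, abs_of_nonpos, ENNReal.toReal_nonneg,
      neg_nonpos.2 (ENNReal.toReal_nonneg)] <;> rfl
  calc ∑ i, |(α i).rnDeriv μ x|
      = ∑ i, (((p i).rnDeriv μ x).toReal + ((q i).rnDeriv μ x).toReal) :=
        Finset.sum_congr rfl fun i _ => key i
    _ = (∑ i, ((p i).rnDeriv μ x + (q i).rnDeriv μ x)).toReal := by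
        rw [ENNReal.toReal_sum]
        · exact Finset.sum_congr rfl fun i _ => (ENNReal.toReal_add (h4 i).1.ne (h4 i).2.ne).symm
        · intro i _
          exact (ENNReal.add_lt_top.2 ⟨(h4 i).1, (h4 i).2⟩).ne
    _ = (μ.rnDeriv μ x).toReal := by rw [← h2]
    _ = 1 := by rw [h1]; simp
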